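/- arXiv:1910.02691 — 3 statements merged into one kernel-verified Lean document; each statement's English description precedes it below -/
import Mathlib

section
/- (Dense triplets claim) For every α > 0 there exists δ > 0 such that for all integers t ≥ t₀ ≥ 1/δ there exists n₀ ∈ ℕ such that for all n ≥ n₀ the following holds. Let H = ([n], E) be a 3-graph with d(i,j) ≥ min(i, j, n/2) + αn for all pairs {i,j} of distinct vertices, and let [n] = V₀ ∪̇ V₁ ∪̇ … ∪̇ V_t be a partition with |V₀| ≤ δn, |V₁| = … = |V_t| = m where (1−δ)n/t ≤ m ≤ n/t, and such that every vertex v ∈ V_i (i ∈ [t]) satisfies v ≥ i·m − n/t₀. Then for every pair {i,j} of distinct indices in [t], the number of indices k ∈ [t] \ {i,j} with e(V_i, V_j, V_k) ≥ (α/2)·m³ is at least min(i, j, t/2) + (α/3)·t. -/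
/-- `E` is the edge set of a 3-uniform hypergraph on vertex set `[n] = {1, …, n}`. -/
def IsThreeGraph (n : ℕ) (E : Finset (Finset ℕ)) : Prop :=
  ∀ e ∈ E, e.card = 3 ∧ e ⊆ Finset.Icc 1 n

/-- The pair degree `d(i,j)`: the number of vertices `x` with `{i,j,x} ∈ E`. -/
def pairDeg (n : ℕ) (E : Finset (Finset ℕ)) (i j : ℕ) : ℕ :=
  ((Finset.Icc 1 n).filter fun x => ({i, j, x} : Finset ℕ) ∈ E).card

/-- The degree condition `d(i,j) ≥ min(i, j, n/2) + αn` for all distinct `i, j ∈ [n]`. -/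
def DegCond (n : ℕ) (E : Finset (Finset ℕ)) (α : ℝ) : Prop :=
  ∀ i ∈ Finset.Icc 1 n, ∀ j ∈ Finset.Icc 1 n, i ≠ j →
    min (min (i : ℝ) (j : ℝ)) ((n : ℝ) / 2) + α * n ≤ (pairDeg n E i j : ℝ)

/-- `e(V₁, V₂, V₃)`: the number of triples `(v₁, v₂, v₃) ∈ V₁ × V₂ × V₃` with
`{v₁, v₂, v₃} ∈ E`. -/
def tripleCount (E : Finset (Finset ℕ)) (V₁ V₂ V₃ : Finset ℕ) : ℕ :=
  ((V₁ ×ˢ V₂ ×ˢ V₃).filter fun t => ({t.1, t.2.1, t.2.2} : Finset ℕ) ∈ E).card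

open scoped Classical

lemma tripleCount_eq (E : Finset (Finset ℕ)) (V₁ V₂ V₃ : Finset ℕ) :
    tripleCount E V₁ V₂ V₃ =
      ∑ u ∈ V₁, ∑ v ∈ V₂, (V₃.filter fun x => ({u, v, x} : Finset ℕ) ∈ E).card := by
  rw [tripleCount, Finset.card_filter, Finset.sum_product]
  refine Finset.sum_congr rfl fun u _ => ?_
  rw [Finset.sum_product]
  exact Finset.sum_congr rfl fun v _ => (Finset.card_filter _ _).symm


set_option maxHeartbeats 2000000 in
/-- **Dense triplets claim.** For every `α > 0` there is `δ > 0` such that for all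
integers `t ≥ t₀ ≥ 1/δ` there is `n₀` such that the following holds for `n ≥ n₀`.
If `([n], E)` satisfies the degree condition, and `[n] = V₀ ∪̇ V₁ ∪̇ … ∪̇ V_t` (the
classes given by `P 0, …, P t`) is a partition with `|V₀| ≤ δn`,
`|V₁| = … = |V_t| = m` where `(1−δ)n/t ≤ m ≤ n/t`, and every `v ∈ V_i` (`i ∈ [t]`)
satisfies `v ≥ i·m − n/t₀`, then for every pair of distinct `i, j ∈ [t]`, the number
of `k ∈ [t] \ {i,j}` with `e(V_i, V_j, V_k) ≥ (α/2)·m³` is at least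
`min(i, j, t/2) + (α/3)·t`. -/
theorem stmt_12 (α : ℝ) (hα : 0 < α) :
    ∃ δ : ℝ, 0 < δ ∧ ∀ t t₀ : ℕ, t₀ ≤ t → 1 / δ ≤ (t₀ : ℝ) →
      ∃ n₀ : ℕ, ∀ n : ℕ, n₀ ≤ n →
      ∀ E : Finset (Finset ℕ), IsThreeGraph n E → DegCond n E α →
      ∀ m : ℕ, ∀ P : ℕ → Finset ℕ,
        (∀ i ≤ t, ∀ j ≤ t, i ≠ j → Disjoint (P i) (P j)) →
        ((Finset.range (t + 1)).biUnion P = Finset.Icc 1 n) →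
        ((P 0).card : ℝ) ≤ δ * n →
        (∀ i, 1 ≤ i → i ≤ t → (P i).card = m) →
        (1 - δ) * n / t ≤ (m : ℝ) → (m : ℝ) ≤ (n : ℝ) / t →
        (∀ i, 1 ≤ i → i ≤ t → ∀ v ∈ P i, (i : ℝ) * m - (n : ℝ) / t₀ ≤ (v : ℝ)) →
        ∀ i, 1 ≤ i → i ≤ t → ∀ j, 1 ≤ j → j ≤ t → i ≠ j →
          min (min (i : ℝ) (j : ℝ)) ((t : ℝ) / 2) + α / 3 * t ≤
            (((((Finset.Icc 1 t).erase i).erase j).filter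
              fun k => α / 2 * (m : ℝ) ^ 3 ≤ (tripleCount E (P i) (P j) (P k) : ℝ)).card : ℝ) := by
  refine ⟨min α 1 / 48, by positivity, ?_⟩
  intro t t₀ htt₀ ht₀
  refine ⟨1, ?_⟩
  intro n hn E hE hdeg m P hdisj hcover hP0 hcard hmlo hmhi hvert i hi1 hit j hj1 hjt hij
  set δ : ℝ := min α 1 / 48 with hδdef
  have hδpos : 0 < δ := by positivity
  have hδα : 48 * δ ≤ α := by
    have := min_le_left α 1
    simp only [hδdef]; linarith
  have hδ1 : 48 * δ ≤ 1 := by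
    have := min_le_right α 1
    simp only [hδdef]; linarith
  have ht₀pos : (0:ℝ) < t₀ := lt_of_lt_of_le (by positivity) ht₀
  have ht₀δ : 1 / (t₀:ℝ) ≤ δ := by
    rw [div_le_iff₀ ht₀pos]
    rw [div_le_iff₀ hδpos] at ht₀
    linarith
  have htpos : (0:ℝ) < t := lt_of_lt_of_le ht₀pos (by exact_mod_cast htt₀)
  have hnpos : (0:ℝ) < n := by exact_mod_cast Nat.lt_of_lt_of_le Nat.zero_lt_one hn
  have hmpos : (0:ℝ) < m := by
    have h1 : (0:ℝ) < (1 - δ) * n / t := by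
      apply div_pos (mul_pos (by linarith) hnpos) htpos
    linarith
  have htm : (t:ℝ) * m ≤ n := by
    rw [le_div_iff₀ htpos] at hmhi; linarith [hmhi]
  have hntm : (n:ℝ) ≤ 2 * (t * m) := by
    rw [div_le_iff₀ htpos] at hmlo
    nlinarith
  have hδt : 1 ≤ δ * t := by
    calc (1:ℝ) = δ * (1/δ) := by field_simp
    _ ≤ δ * t := by
        apply mul_le_mul_of_nonneg_left _ hδpos.le
        exact le_trans ht₀ (by exact_mod_cast htt₀)
  -- subset of Icc
  have hmemIcc : ∀ l, l ≤ t → P l ⊆ Finset.Icc 1 n := by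
    intro l hl
    rw [← hcover]
    exact Finset.subset_biUnion_of_mem P (Finset.mem_range.2 (Nat.lt_succ_of_le hl))
  -- partition sum of filters
  have hpart : ∀ u v : ℕ,
      ∑ k ∈ Finset.range (t+1), ((P k).filter fun x => ({u,v,x}:Finset ℕ) ∈ E).card
        = pairDeg n E u v := by
    intro u v
    rw [pairDeg, ← hcover, Finset.filter_biUnion, Finset.card_biUnion]
    intro a ha b hb hab
    exact Finset.disjoint_filter_filter
      (hdisj a (Nat.lt_succ_iff.1 (Finset.mem_range.1 ha))
        b (Nat.lt_succ_iff.1 (Finset.mem_range.1 hb)) hab)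
  have hswap : ∑ k ∈ Finset.range (t+1), tripleCount E (P i) (P j) (P k)
      = ∑ u ∈ P i, ∑ v ∈ P j, pairDeg n E u v := by
    simp only [tripleCount_eq]
    rw [Finset.sum_comm]
    refine Finset.sum_congr rfl fun u _ => ?_
    rw [Finset.sum_comm]
    exact Finset.sum_congr rfl fun v _ => hpart u v
  set A : ℝ := min (min (i:ℝ) (j:ℝ)) ((t:ℝ)/2) with hAdef
  -- lower bound on pair degrees
  have hlow : ∀ u ∈ P i, ∀ v ∈ P j,
      A * m + α * (t * m) - δ * n ≤ (pairDeg n E u v : ℝ) := by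
    intro u hu v hv
    have huI := hmemIcc i hit hu
    have hvI := hmemIcc j hjt hv
    have huv : u ≠ v := by
      intro h
      exact (Finset.disjoint_left.1 (hdisj i hit j hjt hij) hu) (h ▸ hv)
    have hd := hdeg u huI v hvI huv
    have hu' : (i:ℝ) * m - (n:ℝ) / t₀ ≤ u := hvert i hi1 hit u hu
    have hv' : (j:ℝ) * m - (n:ℝ) / t₀ ≤ v := hvert j hj1 hjt v hv
    have hnt₀ : (n:ℝ) / t₀ ≤ δ * n := by
      rw [div_le_iff₀ ht₀pos] at ht₀δ ⊢
      nlinarith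
    have hAi : A ≤ (i:ℝ) := le_trans (min_le_left _ _) (min_le_left _ _)
    have hAj : A ≤ (j:ℝ) := le_trans (min_le_left _ _) (min_le_right _ _)
    have hAt : A ≤ (t:ℝ)/2 := min_le_right _ _
    have hAmi : A * m ≤ (i:ℝ) * m := mul_le_mul_of_nonneg_right hAi hmpos.le
    have hAmj : A * m ≤ (j:ℝ) * m := mul_le_mul_of_nonneg_right hAj hmpos.le
    have hAmt : A * m ≤ (t:ℝ)/2 * m := mul_le_mul_of_nonneg_right hAt hmpos.le
    have h1 : A * m - δ * n ≤ min ((u:ℝ)) ((v:ℝ)) := by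
      apply le_min
      · linarith
      · linarith
    have h2 : A * m - δ * n ≤ (n:ℝ)/2 := by linarith [htm, hδpos.le, mul_nonneg hδpos.le hnpos.le]
    have h3 : A * m - δ * n ≤ min (min (u:ℝ) (v:ℝ)) ((n:ℝ)/2) := le_min h1 h2
    have h4 : α * (t * m) ≤ α * n := mul_le_mul_of_nonneg_left htm hα.le
    linarith [hd, h3, h4]
  -- lower bound on total sum
  have hcardi := hcard i hi1 hit
  have hcardj := hcard j hj1 hjt
  have hSlow : (m:ℝ) * m * (A * m + α * (t * m) - δ * n)
      ≤ ∑ k ∈ Finset.range (t+1), (tripleCount E (P i) (P j) (P k) : ℝ) := by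
    have : (∑ k ∈ Finset.range (t+1), (tripleCount E (P i) (P j) (P k) : ℝ))
        = ∑ u ∈ P i, ∑ v ∈ P j, (pairDeg n E u v : ℝ) := by
      rw [← Nat.cast_sum, hswap]
      push_cast
      rfl
    rw [this]
    calc (m:ℝ) * m * (A * m + α * (t * m) - δ * n)
        = ∑ u ∈ P i, ∑ v ∈ P j, (A * m + α * (t * m) - δ * n) := by
          rw [Finset.sum_const, Finset.sum_const, hcardi, hcardj]
          simp [nsmul_eq_mul]; ring
      _ ≤ _ := Finset.sum_le_sum fun u hu => Finset.sum_le_sum fun v hv => hlow u hu v hv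
  -- generic upper bound on tripleCount
  have htripU : ∀ k, (tripleCount E (P i) (P j) (P k) : ℝ) ≤ (m:ℝ) * m * (P k).card := by
    intro k
    have h1 : tripleCount E (P i) (P j) (P k) ≤ (P i).card * ((P j).card * (P k).card) := by
      rw [tripleCount]
      calc _ ≤ ((P i) ×ˢ (P j) ×ˢ (P k)).card := Finset.card_filter_le _ _
        _ = _ := by rw [Finset.card_product, Finset.card_product]
    have := (Nat.cast_le (α := ℝ)).2 h1
    rw [hcardi, hcardj] at h1
    calc (tripleCount E (P i) (P j) (P k) : ℝ) ≤ ((m * (m * (P k).card) : ℕ) : ℝ) := by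
          exact_mod_cast h1
      _ = (m:ℝ) * m * (P k).card := by push_cast; ring
  -- split the sum
  have hrange : Finset.range (t+1) = insert 0 (Finset.Icc 1 t) := by
    ext x; simp [Nat.lt_succ_iff]; omega
  have hiI : i ∈ Finset.Icc 1 t := Finset.mem_Icc.2 ⟨hi1, hit⟩
  have hjI : j ∈ (Finset.Icc 1 t).erase i :=
    Finset.mem_erase.2 ⟨hij.symm, Finset.mem_Icc.2 ⟨hj1, hjt⟩⟩
  set ee := ((Finset.Icc 1 t).erase i).erase j with heedef
  set G := ee.filter fun k => α / 2 * (m : ℝ) ^ 3 ≤ (tripleCount E (P i) (P j) (P k) : ℝ)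
    with hGdef
  set B := ee.filter fun k => ¬ (α / 2 * (m : ℝ) ^ 3 ≤ (tripleCount E (P i) (P j) (P k) : ℝ))
    with hBdef
  have hsplit : ∑ k ∈ Finset.range (t+1), (tripleCount E (P i) (P j) (P k) : ℝ)
      = (tripleCount E (P i) (P j) (P 0) : ℝ)
        + ((tripleCount E (P i) (P j) (P i) : ℝ)
        + ((tripleCount E (P i) (P j) (P j) : ℝ)
        + (∑ k ∈ G, (tripleCount E (P i) (P j) (P k) : ℝ)
          + ∑ k ∈ B, (tripleCount E (P i) (P j) (P k) : ℝ)))) := by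
    rw [hrange, Finset.sum_insert (by simp)]
    congr 1
    rw [← Finset.add_sum_erase _ _ hiI]
    congr 1
    rw [← Finset.add_sum_erase _ _ hjI]
    congr 1
    rw [Finset.sum_filter_add_sum_filter_not]
  -- bounds on the pieces
  have hm3 : ∀ k, k ∈ ee → (tripleCount E (P i) (P j) (P k) : ℝ) ≤ (m:ℝ)^3 := by
    intro k hk
    have hk' : k ∈ Finset.Icc 1 t := Finset.mem_of_mem_erase (Finset.mem_of_mem_erase hk)
    rw [Finset.mem_Icc] at hk'
    have := htripU k
    rw [hcard k hk'.1 hk'.2] at this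
    calc _ ≤ (m:ℝ) * m * m := this
      _ = (m:ℝ)^3 := by ring
  have h0 : (tripleCount E (P i) (P j) (P 0) : ℝ) ≤ (m:ℝ) * m * (δ * n) := by
    calc _ ≤ (m:ℝ) * m * (P 0).card := htripU 0
      _ ≤ (m:ℝ) * m * (δ * n) :=
          mul_le_mul_of_nonneg_left hP0 (by positivity)
  have hii : (tripleCount E (P i) (P j) (P i) : ℝ) ≤ (m:ℝ)^3 := by
    have := htripU i; rw [hcardi] at this
    calc _ ≤ (m:ℝ) * m * m := this
      _ = (m:ℝ)^3 := by ring
  have hjj : (tripleCount E (P i) (P j) (P j) : ℝ) ≤ (m:ℝ)^3 := by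
    have := htripU j; rw [hcardj] at this
    calc _ ≤ (m:ℝ) * m * m := this
      _ = (m:ℝ)^3 := by ring
  have hGsum : ∑ k ∈ G, (tripleCount E (P i) (P j) (P k) : ℝ) ≤ (G.card : ℝ) * (m:ℝ)^3 := by
    calc _ ≤ ∑ k ∈ G, (m:ℝ)^3 :=
          Finset.sum_le_sum fun k hk => hm3 k (Finset.mem_of_mem_filter k hk)
      _ = (G.card : ℝ) * (m:ℝ)^3 := by rw [Finset.sum_const, nsmul_eq_mul]
  have hBcard : (B.card : ℝ) ≤ (t : ℝ) := by
    have h1 : B ⊆ Finset.Icc 1 t := by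
      intro k hk
      exact Finset.mem_of_mem_erase (Finset.mem_of_mem_erase (Finset.mem_of_mem_filter k hk))
    have h2 : B.card ≤ (Finset.Icc 1 t).card := Finset.card_le_card h1
    rw [Nat.card_Icc] at h2
    exact_mod_cast le_trans h2 (by omega)
  have hBsum : ∑ k ∈ B, (tripleCount E (P i) (P j) (P k) : ℝ)
      ≤ (t:ℝ) * (α / 2 * (m:ℝ)^3) := by
    calc _ ≤ ∑ k ∈ B, α / 2 * (m:ℝ)^3 := by
          refine Finset.sum_le_sum fun k hk => ?_
          have := (Finset.mem_filter.1 hk).2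
          linarith [le_of_not_ge this]
      _ = (B.card : ℝ) * (α / 2 * (m:ℝ)^3) := by rw [Finset.sum_const, nsmul_eq_mul]
      _ ≤ (t:ℝ) * (α / 2 * (m:ℝ)^3) := by
          apply mul_le_mul_of_nonneg_right hBcard (by positivity)
  -- combine
  have key : (m:ℝ) * m * (A * m + α * (t * m) - δ * n)
      ≤ (m:ℝ) * m * (δ * n) + 2 * (m:ℝ)^3 + (G.card : ℝ) * (m:ℝ)^3
        + (t:ℝ) * (α / 2 * (m:ℝ)^3) := by
    rw [hsplit] at hSlow
    linarith
  -- final arithmetic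
  have hδn : (m:ℝ) * m * (δ * n) ≤ 2 * δ * t * (m:ℝ)^3 := by
    have h := mul_le_mul_of_nonneg_left hntm
      (show (0:ℝ) ≤ (m:ℝ) * m * δ by positivity)
    linarith [h]
  have key2 : A * (m:ℝ)^3 + α * t * (m:ℝ)^3
      ≤ 4 * δ * t * (m:ℝ)^3 + 2 * (m:ℝ)^3 + (G.card : ℝ) * (m:ℝ)^3
        + α / 2 * t * (m:ℝ)^3 := by linarith [key, hδn]
  have hm3pos : (0:ℝ) < (m:ℝ)^3 := by positivity
  have key3 : A + α * t ≤ 4 * δ * t + 2 + (G.card : ℝ) + α / 2 * t := by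
    rw [← mul_le_mul_iff_left₀ hm3pos]
    ring_nf
    ring_nf at key2
    linarith only [key2]
  have hfin : 2 ≤ (α/6 - 4*δ) * t := by
    have h48 : 48 * δ * t ≤ α * t := mul_le_mul_of_nonneg_right hδα htpos.le
    linarith [hδt, h48]
  calc A + α / 3 * t ≤ (G.card : ℝ) := by linarith [key3, hfin]
    _ = _ := rfl
end

section
/- (Climbing-up walks) For every α ∈ (0,1) and every integer ℓ ≥ 3 there exists n₀ ∈ ℕ such that for all n ≥ n₀ the following holds. If H = ([n], E) is a 3-graph with d(i,j) ≥ min(i, j, n/2) + αn for all pairs {i,j} of distinct vertices, then for every ordered pair (x,y) of distinct vertices the number of tight walks x₁ = x, x₂ = y, x₃, …, x_ℓ in H such that x_i ≥ min(αn(i−2)/4, n/2) + αn/4 for every 3 ≤ i ≤ ℓ is at least (α/5)^{ℓ−2}·n^{ℓ−2}. -/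
/-- `f` lists the `k` vertices of a tight walk in `([n], E)`: a sequence of (not
necessarily distinct) vertices of `[n]` such that any three consecutive vertices
are pairwise distinct and form an edge. -/
def IsTightWalkOn (n : ℕ) (E : Finset (Finset ℕ)) (k : ℕ) (f : Fin k → ℕ) : Prop :=
  (∀ i, f i ∈ Finset.Icc 1 n) ∧
  ∀ i : ℕ, ∀ h : i + 2 < k,
    (f ⟨i, by omega⟩ ≠ f ⟨i + 1, by omega⟩ ∧ f ⟨i, by omega⟩ ≠ f ⟨i + 2, h⟩ ∧
      f ⟨i + 1, by omega⟩ ≠ f ⟨i + 2, h⟩) ∧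
    ({f ⟨i, by omega⟩, f ⟨i + 1, by omega⟩, f ⟨i + 2, h⟩} : Finset ℕ) ∈ E

namespace Stmt13

noncomputable section

/-- threshold for Lean-index `j` (constraint for `j ≥ 2`). -/
def thr (α : ℝ) (n : ℕ) (j : ℕ) : ℝ :=
  min (α * n * ((j : ℝ) - 1) / 4) ((n : ℝ) / 2) + α * n / 4

/-- threshold with value 1 for indices `< 2`. -/
def thr' (α : ℝ) (n : ℕ) (j : ℕ) : ℝ := if j < 2 then 1 else thr α n j

lemma thr'_succ {α : ℝ} {n : ℕ} (hα0 : 0 < α) (hn : 40 ≤ α * n) (j : ℕ) :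
    thr' α n j ≤ thr' α n (j + 1) := by
  have hn0 : (0:ℝ) ≤ n := Nat.cast_nonneg n
  rcases Nat.lt_or_ge j 2 with hj | hj
  · rcases Nat.lt_or_ge (j+1) 2 with hj1 | hj1
    · simp [thr', hj, hj1]
    · simp only [thr', if_pos hj, if_neg (by omega : ¬ j + 1 < 2)]
      have hj' : j = 1 := by omega
      subst hj'
      unfold thr
      have h1 : (0:ℝ) ≤ α * n * ((2:ℕ) - 1 : ℝ) / 4 := by norm_num; positivity
      have h2 : (0:ℝ) ≤ (n:ℝ)/2 := by positivity
      have := le_min h1 h2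
      nlinarith
  · simp only [thr', if_neg (by omega : ¬ j < 2), if_neg (by omega : ¬ j + 1 < 2)]
    unfold thr
    have h : α * n * ((j:ℝ) - 1) / 4 ≤ α * n * (((j:ℕ)+1:ℝ) - 1) / 4 := by
      have : (0:ℝ) ≤ α * n := by positivity
      nlinarith
    push_cast at h ⊢
    have := min_le_min h (le_refl ((n:ℝ)/2))
    linarith

lemma thr'_mono {α : ℝ} {n : ℕ} (hα0 : 0 < α) (hn : 40 ≤ α * n) {j j' : ℕ} (h : j ≤ j') :
    thr' α n j ≤ thr' α n j' := by
  induction j' with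
  | zero => simpa [Nat.le_zero.mp h] using le_refl _
  | succ m ih =>
    rcases Nat.lt_or_ge j (m+1) with h' | h'
    · exact le_trans (ih (by omega)) (thr'_succ hα0 hn m)
    · have : j = m + 1 := by omega
      subst this; exact le_refl _

lemma thr_nonneg {α : ℝ} {n : ℕ} (hα0 : 0 < α) {k : ℕ} (hk : 2 ≤ k) : 0 ≤ thr α n k := by
  have hk' : (2:ℝ) ≤ (k:ℕ) := by exact_mod_cast hk
  have hn0 : (0:ℝ) ≤ n := Nat.cast_nonneg n
  unfold thr
  have h1 : (0:ℝ) ≤ α * n * ((k:ℝ) - 1) / 4 := by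
    have := mul_nonneg (mul_nonneg hα0.le hn0) (by linarith : (0:ℝ) ≤ (k:ℝ) - 1)
    linarith
  have h2 : (0:ℝ) ≤ (n:ℝ)/2 := by positivity
  have := le_min h1 h2
  nlinarith

/-- Key numeric fact: the next threshold exceeds the guaranteed minimum degree base
by at most `3αn/4`. -/
lemma thr_le {α : ℝ} {n : ℕ} (hα0 : 0 < α) (hα1 : α < 1) (hn : 40 ≤ α * n)
    {k : ℕ} (hk : 2 ≤ k) :
    thr α n k ≤ min (thr' α n (k-2)) ((n:ℝ)/2) + 3 * (α * n) / 4 := by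
  have hn0 : (0:ℝ) ≤ n := Nat.cast_nonneg n
  have hn40 : (40:ℝ) ≤ n := by nlinarith
  have hq0 : (0:ℝ) ≤ α * n / 4 := by positivity
  rcases Nat.lt_or_ge k 4 with hk4 | hk4
  · -- k = 2 or 3 : thr' (k-2) = 1, min = 1
    have h1 : thr' α n (k-2) = 1 := by
      have : k - 2 < 2 := by omega
      simp [thr', this]
    have h2 : min (thr' α n (k-2)) ((n:ℝ)/2) = 1 := by
      rw [h1]; exact min_eq_left (by linarith)
    rw [h2]
    have hk' : (k:ℝ) ≤ 3 := by exact_mod_cast (by omega : k ≤ 3)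
    unfold thr
    have h3 : min (α * n * ((k:ℝ) - 1) / 4) ((n:ℝ)/2) ≤ α * n * ((k:ℝ) - 1) / 4 :=
      min_le_left _ _
    nlinarith
  · -- k ≥ 4
    have h1 : thr' α n (k-2) = thr α n (k-2) := by
      unfold thr'; rw [if_neg (by omega : ¬ k - 2 < 2)]
    rw [h1]
    unfold thr
    have hc : ((k-2:ℕ):ℝ) = (k:ℝ) - 2 := by
      rw [Nat.cast_sub (by omega : 2 ≤ k)]; norm_num
    rw [hc]
    set A := α * n * ((k:ℝ) - 3) / 4 with hA
    set q := α * n / 4 with hq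
    set h := (n:ℝ)/2 with hh
    have e1 : α * n * ((k:ℝ) - 2 - 1) / 4 = A := by rw [hA]; ring
    have e2 : α * n * ((k:ℝ) - 1) / 4 = A + 2 * q := by rw [hA, hq]; ring
    rw [e1, e2]
    have H1 : min (A + 2*q) h ≤ min A h + 2*q := by
      rcases le_total A h with h' | h'
      · rw [min_eq_left h']; exact le_trans (min_le_left _ _) (le_refl _)
      · rw [min_eq_right h']; linarith [min_le_right (A + 2*q) h]
    have H2 : min (A + 2*q) h ≤ h := min_le_right _ _
    have := le_min (show min (A+2*q) h + q - 3*(α*n)/4 ≤ min A h + q by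
        rw [hq] at *; linarith)
      (show min (A+2*q) h + q - 3*(α*n)/4 ≤ h by rw [hq] at *; linarith)
    linarith


/-- The set of admissible extensions of a walk ending in `a, b`. -/
def extSet (n : ℕ) (E : Finset (Finset ℕ)) (α : ℝ) (k : ℕ) (a b : ℕ) : Finset ℕ :=
  (Finset.Icc 1 n).filter
    (fun c => ({a, b, c} : Finset ℕ) ∈ E ∧ c ≠ a ∧ c ≠ b ∧ thr α n k ≤ (c : ℝ))

lemma mem_extSet {n : ℕ} {E : Finset (Finset ℕ)} {α : ℝ} {k a b c : ℕ} :
    c ∈ extSet n E α k a b ↔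
      c ∈ Finset.Icc 1 n ∧
        (({a, b, c} : Finset ℕ) ∈ E ∧ c ≠ a ∧ c ≠ b ∧ thr α n k ≤ (c : ℝ)) :=
  Finset.mem_filter

lemma ext_card {α : ℝ} {n : ℕ} (hα0 : 0 < α) (hα1 : α < 1) (hn : 40 ≤ α * n)
    {E : Finset (Finset ℕ)} (hdeg : DegCond n E α) {k : ℕ} (hk : 2 ≤ k)
    {a b : ℕ} (ha : a ∈ Finset.Icc 1 n) (hb : b ∈ Finset.Icc 1 n) (hab : a ≠ b)
    (ha' : thr' α n (k-2) ≤ (a:ℝ)) (hb' : thr' α n (k-1) ≤ (b:ℝ)) :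
    α * n / 5 ≤ ((extSet n E α k a b).card : ℝ) := by
  classical
  have hn0 : (0:ℝ) ≤ n := Nat.cast_nonneg n
  have hT0 : 0 ≤ thr α n k := thr_nonneg hα0 hk
  set N : Finset ℕ := (Finset.Icc 1 n).filter (fun c => ({a, b, c} : Finset ℕ) ∈ E) with hN
  have hNd : N.card = pairDeg n E a b := rfl
  have hd : min (min (a:ℝ) (b:ℝ)) ((n:ℝ)/2) + α * n ≤ (N.card : ℝ) := by
    rw [hNd]; exact hdeg a ha b hb hab
  -- lower bound on the min
  have hmono : thr' α n (k-2) ≤ thr' α n (k-1) := thr'_mono hα0 hn (by omega)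
  have hmin : min (thr' α n (k-2)) ((n:ℝ)/2) ≤ min (min (a:ℝ) (b:ℝ)) ((n:ℝ)/2) :=
    min_le_min (le_min ha' (le_trans hmono hb')) (le_refl _)
  -- the bad low set
  set B : Finset ℕ := (Finset.Icc 1 n).filter (fun c => (c:ℝ) < thr α n k) with hB
  have hBcard : (B.card : ℝ) ≤ thr α n k := by
    have hsub : B ⊆ Finset.Icc 1 (Nat.floor (thr α n k)) := by
      intro c hc
      rw [hB, Finset.mem_filter] at hc
      obtain ⟨hc1, hc2⟩ := hc
      rw [Finset.mem_Icc] at hc1 ⊢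
      exact ⟨hc1.1, Nat.le_floor hc2.le⟩
    have := Finset.card_le_card hsub
    have h2 : (Finset.Icc 1 (Nat.floor (thr α n k))).card = Nat.floor (thr α n k) := by
      rw [Nat.card_Icc]; omega
    rw [h2] at this
    calc (B.card : ℝ) ≤ (Nat.floor (thr α n k) : ℝ) := by exact_mod_cast this
      _ ≤ thr α n k := Nat.floor_le hT0
  have hsub : N ⊆ extSet n E α k a b ∪ ({a, b} ∪ B) := by
    intro c hc
    rw [hN, Finset.mem_filter] at hc
    obtain ⟨hcI, hcE⟩ := hc
    by_cases h1 : c = a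
    · exact Finset.mem_union_right _ (Finset.mem_union_left _ (by simp [h1]))
    by_cases h2 : c = b
    · exact Finset.mem_union_right _ (Finset.mem_union_left _ (by simp [h2]))
    by_cases h3 : thr α n k ≤ (c:ℝ)
    · refine Finset.mem_union_left _ ?_
      exact mem_extSet.mpr ⟨hcI, hcE, h1, h2, h3⟩
    · refine Finset.mem_union_right _ (Finset.mem_union_right _ ?_)
      rw [hB, Finset.mem_filter]
      exact ⟨hcI, not_le.mp h3⟩
  have hcard : (N.card : ℝ) ≤ ((extSet n E α k a b).card : ℝ) + 2 + (B.card : ℝ) := by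
    have h1 : N.card ≤ (extSet n E α k a b).card + (({a,b} : Finset ℕ) ∪ B).card :=
      le_trans (Finset.card_le_card hsub) (Finset.card_union_le _ _)
    have h2 : (({a,b} : Finset ℕ) ∪ B).card ≤ 2 + B.card := by
      refine le_trans (Finset.card_union_le _ _) ?_
      have : ({a,b} : Finset ℕ).card ≤ 2 :=
        le_trans (Finset.card_insert_le _ _) (by simp)
      omega
    have h3 := le_trans h1 (by omega : (extSet n E α k a b).card + (({a,b} : Finset ℕ) ∪ B).card ≤ (extSet n E α k a b).card + (2 + B.card))
    have h4 : (N.card : ℝ) ≤ (((extSet n E α k a b).card + (2 + B.card) : ℕ) : ℝ) :=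
      Nat.cast_le.mpr h3
    push_cast at h4
    linarith
  have hC := thr_le hα0 hα1 hn hk
  linarith


def WalkP (n : ℕ) (E : Finset (Finset ℕ)) (α : ℝ) (x y : ℕ) (k : ℕ)
    (f : Fin k → ℕ) : Prop :=
  (∀ i : ℕ, ∀ h : i + 2 < k,
    (f ⟨i, by omega⟩ ≠ f ⟨i + 1, by omega⟩ ∧ f ⟨i, by omega⟩ ≠ f ⟨i + 2, h⟩ ∧
      f ⟨i + 1, by omega⟩ ≠ f ⟨i + 2, h⟩) ∧
    ({f ⟨i, by omega⟩, f ⟨i + 1, by omega⟩, f ⟨i + 2, h⟩} : Finset ℕ) ∈ E) ∧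
  (∀ i : Fin k, (i : ℕ) = 0 → f i = x) ∧
  (∀ i : Fin k, (i : ℕ) = 1 → f i = y) ∧
  (∀ i : Fin k, 2 ≤ (i : ℕ) → thr α n (i : ℕ) ≤ (f i : ℝ))

def walkSet (n : ℕ) (E : Finset (Finset ℕ)) (α : ℝ) (x y : ℕ) (k : ℕ) :
    Finset (Fin k → ℕ) :=
  @Finset.filter _ (WalkP n E α x y k) (Classical.decPred _)
    (Fintype.piFinset fun _ => Finset.Icc 1 n)

lemma mem_walkSet {n : ℕ} {E : Finset (Finset ℕ)} {α : ℝ} {x y : ℕ} {k : ℕ}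
    {f : Fin k → ℕ} :
    f ∈ walkSet n E α x y k ↔ (∀ i, f i ∈ Finset.Icc 1 n) ∧ WalkP n E α x y k f := by
  unfold walkSet
  rw [@Finset.mem_filter _ _ (Classical.decPred _), Fintype.mem_piFinset]


lemma walk_step {α : ℝ} {n : ℕ} (hα0 : 0 < α) (hα1 : α < 1) (hn : 40 ≤ α * n)
    {E : Finset (Finset ℕ)} (hdeg : DegCond n E α) {x y : ℕ}
    (hx : x ∈ Finset.Icc 1 n) (hy : y ∈ Finset.Icc 1 n) (hxy : x ≠ y)
    {k : ℕ} (hk : 2 ≤ k) :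
    α * n / 5 * ((walkSet n E α x y k).card : ℝ) ≤
      ((walkSet n E α x y (k+1)).card : ℝ) := by
  classical
  have emk : ∀ {m : ℕ} (i j : ℕ) (hi : i < m) (hj : j < m), i = j →
      (⟨i, hi⟩ : Fin m) = ⟨j, hj⟩ := by
    intro m i j hi hj h; subst h; rfl
  have hr : ∀ f ∈ walkSet n E α x y (k+1),
      (fun j => f (Fin.castSucc j)) ∈ walkSet n E α x y k := by
    intro f hf
    rw [mem_walkSet] at hf ⊢
    obtain ⟨hpi, h1, h2, h3, h4⟩ := hf
    refine ⟨fun i => hpi _, ?_, ?_, ?_, ?_⟩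
    · intro i h
      exact h1 i (by omega)
    · intro i hi
      exact h2 (Fin.castSucc i) hi
    · intro i hi
      exact h3 (Fin.castSucc i) hi
    · intro i hi
      exact h4 (Fin.castSucc i) hi
  have hfib : ∀ g ∈ walkSet n E α x y k,
      α * n / 5 ≤ (((walkSet n E α x y (k+1)).filter
        (fun f => (fun j => f (Fin.castSucc j)) = g)).card : ℝ) := by
    intro g hg
    rw [mem_walkSet] at hg
    obtain ⟨hpi, h1, h2, h3, h4⟩ := hg
    have hk2 : k - 2 < k := by omega
    have hk1 : k - 1 < k := by omega
    have hab : g ⟨k-2, hk2⟩ ≠ g ⟨k-1, hk1⟩ := by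
      rcases Nat.lt_or_ge k 3 with h | h
      · have hkk : k = 2 := by omega
        subst hkk
        have ea : g ⟨2-2, hk2⟩ = x := h2 _ rfl
        have eb : g ⟨2-1, hk1⟩ = y := h3 _ rfl
        rw [ea, eb]; exact hxy
      · have := (h1 (k-3) (by omega)).1.2.2
        rwa [emk (k-3+1) (k-2) (by omega) hk2 (by omega),
          emk (k-3+2) (k-1) (by omega) hk1 (by omega)] at this
    have ha' : thr' α n (k-2) ≤ ((g ⟨k-2, hk2⟩ : ℕ) : ℝ) := by
      by_cases h : k - 2 < 2
      · rw [thr', if_pos h]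
        exact_mod_cast (Finset.mem_Icc.mp (hpi ⟨k-2, hk2⟩)).1
      · rw [thr', if_neg h]
        exact h4 ⟨k-2, hk2⟩ (show 2 ≤ k - 2 by omega)
    have hb' : thr' α n (k-1) ≤ ((g ⟨k-1, hk1⟩ : ℕ) : ℝ) := by
      by_cases h : k - 1 < 2
      · rw [thr', if_pos h]
        exact_mod_cast (Finset.mem_Icc.mp (hpi ⟨k-1, hk1⟩)).1
      · rw [thr', if_neg h]
        exact h4 ⟨k-1, hk1⟩ (show 2 ≤ k - 1 by omega)
    have hext := ext_card hα0 hα1 hn hdeg hk (hpi ⟨k-2, hk2⟩) (hpi ⟨k-1, hk1⟩)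
      hab ha' hb'
    refine le_trans hext (Nat.cast_le.mpr ?_)
    refine Finset.card_le_card_of_injOn (fun c => Fin.snoc g c) ?_ ?_
    · intro c hc
      rw [Finset.mem_coe, mem_extSet] at hc
      obtain ⟨hcI, hcE, hca, hcb, hcT⟩ := hc
      beta_reduce
      have hcast : ∀ (i : ℕ) (h : i < k),
          (Fin.snoc g c : Fin (k+1) → ℕ) ⟨i, by omega⟩ = g ⟨i, h⟩ := by
        intro i h
        have e : (⟨i, by omega⟩ : Fin (k+1)) = Fin.castSucc ⟨i, h⟩ := rfl
        rw [e, Fin.snoc_castSucc]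
      have hlast : (Fin.snoc g c : Fin (k+1) → ℕ) ⟨k, by omega⟩ = c := by
        have e : (⟨k, by omega⟩ : Fin (k+1)) = Fin.last k := rfl
        rw [e, Fin.snoc_last]
      rw [Finset.mem_coe, Finset.mem_filter]
      constructor
      · rw [mem_walkSet]
        refine ⟨?_, ?_, ?_, ?_, ?_⟩
        · intro i
          rcases i with ⟨iv, hiv⟩
          rcases Nat.lt_or_ge iv k with h | h
          · rw [hcast iv h]; exact hpi _
          · have hik : iv = k := by omega
            subst hik
            rw [hlast]; exact hcI
        · intro i h
          rcases Nat.lt_or_ge (i+2) k with h' | h'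
          · rw [hcast i (by omega), hcast (i+1) (by omega), hcast (i+2) h']
            exact h1 i h'
          · have e0 : (Fin.snoc g c : Fin (k+1) → ℕ) ⟨i, by omega⟩ = g ⟨k-2, hk2⟩ := by
              rw [hcast i (by omega), emk i (k-2) (by omega) hk2 (by omega)]
            have e1 : (Fin.snoc g c : Fin (k+1) → ℕ) ⟨i+1, by omega⟩ = g ⟨k-1, hk1⟩ := by
              rw [hcast (i+1) (by omega), emk (i+1) (k-1) (by omega) hk1 (by omega)]
            have e2 : (Fin.snoc g c : Fin (k+1) → ℕ) ⟨i+2, h⟩ = c := by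
              rw [emk (i+2) k h (by omega) (by omega), hlast]
            rw [e0, e1, e2]
            exact ⟨⟨hab, Ne.symm hca, Ne.symm hcb⟩, hcE⟩
        · intro i hi
          rcases i with ⟨iv, hiv⟩
          have hik : iv = 0 := hi
          subst hik
          rw [hcast 0 (by omega)]
          exact h2 _ rfl
        · intro i hi
          rcases i with ⟨iv, hiv⟩
          have hik : iv = 1 := hi
          subst hik
          rw [hcast 1 (by omega)]
          exact h3 _ rfl
        · intro i hi
          rcases i with ⟨iv, hiv⟩
          rcases Nat.lt_or_ge iv k with h | h
          · rw [hcast iv h]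
            exact h4 ⟨iv, h⟩ hi
          · have hik : iv = k := by omega
            subst hik
            rw [hlast]
            exact hcT
      · funext j
        show (Fin.snoc g c : Fin (k+1) → ℕ) (Fin.castSucc j) = g j
        rw [Fin.snoc_castSucc]
    · intro c _ c' _ hcc
      have := congrFun hcc (Fin.last k)
      simpa [Fin.snoc_last] using this
  have hcount := Finset.card_eq_sum_card_fiberwise hr
  calc α * n / 5 * ((walkSet n E α x y k).card : ℝ)
      = ∑ _g ∈ walkSet n E α x y k, α * n / 5 := by
        rw [Finset.sum_const, nsmul_eq_mul]; ring
    _ ≤ ∑ g ∈ walkSet n E α x y k,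
          (((walkSet n E α x y (k+1)).filter
            (fun f => (fun j => f (Fin.castSucc j)) = g)).card : ℝ) :=
        Finset.sum_le_sum hfib
    _ = ((walkSet n E α x y (k+1)).card : ℝ) := by
        rw [hcount]; push_cast; rfl


lemma walk_count {α : ℝ} {n : ℕ} (hα0 : 0 < α) (hα1 : α < 1) (hn : 40 ≤ α * n)
    {E : Finset (Finset ℕ)} (hdeg : DegCond n E α) {x y : ℕ}
    (hx : x ∈ Finset.Icc 1 n) (hy : y ∈ Finset.Icc 1 n) (hxy : x ≠ y) :
    ∀ k, 2 ≤ k → (α * n / 5) ^ (k - 2) ≤ ((walkSet n E α x y k).card : ℝ) := by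
  refine Nat.le_induction ?_ ?_
  · -- base case k = 2
    have hmem : (fun i : Fin 2 => if (i : ℕ) = 0 then x else y) ∈
        walkSet n E α x y 2 := by
      rw [mem_walkSet]
      refine ⟨?_, ?_, ?_, ?_, ?_⟩
      · intro i
        by_cases h : (i : ℕ) = 0 <;> simp [h, Finset.mem_Icc] <;>
          [exact Finset.mem_Icc.mp hx; exact Finset.mem_Icc.mp hy]
      · intro i h; omega
      · intro i hi; simp [hi]
      · intro i hi; simp [hi]
      · intro i hi
        exact absurd hi (by omega)
    have h1 : 1 ≤ (walkSet n E α x y 2).card := Finset.card_pos.mpr ⟨_, hmem⟩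
    have h2 : (1:ℝ) ≤ ((walkSet n E α x y 2).card : ℝ) := by exact_mod_cast h1
    simpa using h2
  · -- inductive step
    intro m hm ih
    have h5 : (0:ℝ) ≤ α * n / 5 := by positivity
    calc (α * n / 5) ^ (m + 1 - 2)
        = (α * n / 5) ^ (m - 2) * (α * n / 5) := by
          rw [← pow_succ]; congr 1; omega
      _ ≤ ((walkSet n E α x y m).card : ℝ) * (α * n / 5) :=
          mul_le_mul_of_nonneg_right ih h5
      _ = α * n / 5 * ((walkSet n E α x y m).card : ℝ) := mul_comm _ _
      _ ≤ ((walkSet n E α x y (m+1)).card : ℝ) := walk_step hα0 hα1 hn hdeg hx hy hxy hm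

end

end Stmt13

/-- **Climbing-up walks.** For `α ∈ (0,1)` and `ℓ ≥ 3` there is `n₀` such that for
`n ≥ n₀`, in any 3-graph `([n], E)` satisfying the degree condition, for any ordered
pair `(x, y)` of distinct vertices the number of tight walks `x₁ = x, x₂ = y, x₃, …,
x_ℓ` with `x_i ≥ min(αn(i−2)/4, n/2) + αn/4` for all `3 ≤ i ≤ ℓ` is at least
`(α/5)^(ℓ−2) · n^(ℓ−2)`.  (The walk is indexed here by `Fin ℓ`, so the vertex `x_i`
above is `f ⟨i − 1, _⟩`.) -/


theorem stmt_13 (α : ℝ) (hα0 : 0 < α) (hα1 : α < 1) (ℓ : ℕ) (hℓ : 3 ≤ ℓ) :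
    ∃ n₀ : ℕ, ∀ n : ℕ, n₀ ≤ n →
      ∀ E : Finset (Finset ℕ), IsThreeGraph n E → DegCond n E α →
      ∀ x y : ℕ, x ∈ Finset.Icc 1 n → y ∈ Finset.Icc 1 n → x ≠ y →
        (α / 5) ^ (ℓ - 2) * (n : ℝ) ^ (ℓ - 2) ≤
          (Set.ncard {f : Fin ℓ → ℕ | IsTightWalkOn n E ℓ f ∧
            f ⟨0, by omega⟩ = x ∧ f ⟨1, by omega⟩ = y ∧
            ∀ i : Fin ℓ, 2 ≤ (i : ℕ) →
              min (α * n * ((i : ℕ) - 1 : ℝ) / 4) ((n : ℝ) / 2) + α * n / 4 ≤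
                (f i : ℝ)} : ℝ) := by
  refine ⟨Nat.ceil ((40:ℝ) / α), fun n hn E hE3 hdeg x y hx hy hxy => ?_⟩
  have hn' : (40:ℝ) ≤ α * n := by
    have h1 : (40:ℝ) / α ≤ (n:ℝ) := le_trans (Nat.le_ceil _) (by exact_mod_cast hn)
    rw [div_le_iff₀ hα0] at h1
    linarith
  have hset : {f : Fin ℓ → ℕ | IsTightWalkOn n E ℓ f ∧
      f ⟨0, by omega⟩ = x ∧ f ⟨1, by omega⟩ = y ∧
      ∀ i : Fin ℓ, 2 ≤ (i : ℕ) →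
        min (α * n * ((i : ℕ) - 1 : ℝ) / 4) ((n : ℝ) / 2) + α * n / 4 ≤
          (f i : ℝ)} = ↑(Stmt13.walkSet n E α x y ℓ) := by
    ext f
    simp only [Set.mem_setOf_eq, Finset.mem_coe, Stmt13.mem_walkSet]
    constructor
    · rintro ⟨⟨hpi, htr⟩, h0, h1, hthr⟩
      refine ⟨hpi, htr, ?_, ?_, fun i hi => hthr i hi⟩
      · intro i hi
        rcases i with ⟨iv, hiv⟩
        have : iv = 0 := hi
        subst this
        exact h0
      · intro i hi
        rcases i with ⟨iv, hiv⟩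
        have : iv = 1 := hi
        subst this
        exact h1
    · rintro ⟨hpi, htr, h0, h1, hthr⟩
      exact ⟨⟨hpi, htr⟩, h0 _ rfl, h1 _ rfl, fun i hi => hthr i hi⟩
  rw [hset, Set.ncard_coe_finset]
  rw [← mul_pow, show α / 5 * (n:ℝ) = α * n / 5 by ring]
  exact Stmt13.walk_count hα0 hα1 hn' hdeg hx hy hxy ℓ (by omega)
end

section
/- (Common edges of link graphs) For every α > 0 there exists n₀ ∈ ℕ such that for all n ≥ n₀ the following holds. If H = ([n], E) is a 3-graph with d(i,j) ≥ min(i, j, n/2) + αn for all pairs {i,j} of distinct vertices, then for any two distinct vertices u, v ∈ [n] with u ≥ n/2 and v ≥ n/2, the link graphs L_u and L_v have at least αn²/4 common edges, i.e. |E(L_u) ∩ E(L_v)| ≥ αn²/4. -/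
/-- **Common edges of link graphs.** For every `α > 0` there is `n₀` such that for
`n ≥ n₀`, in any 3-graph `([n], E)` satisfying the degree condition, any two distinct
vertices `u, v ≥ n/2` have link graphs sharing at least `αn²/4` edges; a common edge
of `L_u` and `L_v` is a 2-element set `p = {x,y} ⊆ [n]` with `{x,y,u} ∈ E` and
`{x,y,v} ∈ E`. -/
theorem stmt_14 (α : ℝ) (hα : 0 < α) :
    ∃ n₀ : ℕ, ∀ n : ℕ, n₀ ≤ n →
      ∀ E : Finset (Finset ℕ), IsThreeGraph n E → DegCond n E α →
      ∀ u v : ℕ, u ∈ Finset.Icc 1 n → v ∈ Finset.Icc 1 n → u ≠ v →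
        (n : ℝ) / 2 ≤ (u : ℝ) → (n : ℝ) / 2 ≤ (v : ℝ) →
        α * (n : ℝ) ^ 2 / 4 ≤
          ((((Finset.Icc 1 n).powersetCard 2).filter
            fun p => insert u p ∈ E ∧ insert v p ∈ E).card : ℝ) := by
  classical
  refine ⟨8, fun n hn E hE hdeg u v hu hv huv hun hvn => ?_⟩
  set I : Finset ℕ := Finset.Icc 1 n with hI
  set S : Finset ℕ := I.filter (fun x => n ≤ 2*x ∧ x ≠ u ∧ x ≠ v) with hS
  set T : ℕ → Finset ℕ := fun x =>
    I.filter (fun y => ({u,x,y}:Finset ℕ) ∈ E ∧ ({v,x,y}:Finset ℕ) ∈ E) with hT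
  set P : Finset (ℕ×ℕ) := (S ×ˢ I).filter
    (fun q => ({u,q.1,q.2}:Finset ℕ) ∈ E ∧ ({v,q.1,q.2}:Finset ℕ) ∈ E) with hP
  set F : Finset (Finset ℕ) := (I.powersetCard 2).filter
    (fun p => insert u p ∈ E ∧ insert v p ∈ E) with hF
  have hIcard : I.card = n := by simp [hI]
  have hpair2 : ∀ a b : ℕ, ({a, b} : Finset ℕ).card ≤ 2 := by
    intro a b
    exact (Finset.card_insert_le _ _).trans (by simp)
  -- distinctness of vertices of an edge
  have hdist : ∀ w a b : ℕ, ({w,a,b} : Finset ℕ) ∈ E → w ≠ a ∧ w ≠ b ∧ a ≠ b := by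
    intro w a b hmem
    have h3 := (hE _ hmem).1
    refine ⟨?_, ?_, ?_⟩ <;> rintro rfl
    · have hsub : ({w,w,b} : Finset ℕ) ⊆ {w, b} := by
        intro z hz; simp only [Finset.mem_insert, Finset.mem_singleton] at hz ⊢; tauto
      have := (Finset.card_le_card hsub).trans (hpair2 w b)
      omega
    · have hsub : ({w,a,w} : Finset ℕ) ⊆ {w, a} := by
        intro z hz; simp only [Finset.mem_insert, Finset.mem_singleton] at hz ⊢; tauto
      have := (Finset.card_le_card hsub).trans (hpair2 w a)
      omega
    · have hsub : ({w,a,a} : Finset ℕ) ⊆ {w, a} := by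
        intro z hz; simp only [Finset.mem_insert, Finset.mem_singleton] at hz ⊢; tauto
      have := (Finset.card_le_card hsub).trans (hpair2 w a)
      omega
  -- lower bound on |T x| for x ∈ S
  have hTx : ∀ x ∈ S, 2*α*n ≤ ((T x).card : ℝ) := by
    intro x hx
    simp only [hS, Finset.mem_filter, hI, Finset.mem_Icc] at hx
    obtain ⟨⟨hx1, hxn⟩, hx2, hxu, hxv⟩ := hx
    have hxI : x ∈ Finset.Icc 1 n := Finset.mem_Icc.mpr ⟨hx1, hxn⟩
    have hA := hdeg u hu x hxI (fun h => hxu h.symm)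
    have hB := hdeg v hv x hxI (fun h => hxv h.symm)
    have hxhalf : (n:ℝ)/2 ≤ (x:ℝ) := by
      have : (n:ℝ) ≤ 2*(x:ℝ) := by exact_mod_cast hx2
      linarith
    have hminA : (n:ℝ)/2 ≤ min (min (u:ℝ) (x:ℝ)) ((n:ℝ)/2) :=
      le_min (le_min hun hxhalf) le_rfl
    have hminB : (n:ℝ)/2 ≤ min (min (v:ℝ) (x:ℝ)) ((n:ℝ)/2) :=
      le_min (le_min hvn hxhalf) le_rfl
    set A : Finset ℕ := I.filter (fun y => ({u,x,y}:Finset ℕ) ∈ E) with hAdef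
    set B : Finset ℕ := I.filter (fun y => ({v,x,y}:Finset ℕ) ∈ E) with hBdef
    have hTAB : T x = A ∩ B := by
      simp only [hT, hAdef, hBdef]
      exact Finset.filter_and _ _ _
    have hAcard : A.card = pairDeg n E u x := rfl
    have hBcard : B.card = pairDeg n E v x := rfl
    have hUnion : (A ∪ B).card ≤ n := by
      have hsub : A ∪ B ⊆ I :=
        Finset.union_subset (Finset.filter_subset _ _) (Finset.filter_subset _ _)
      have := Finset.card_le_card hsub
      omega
    have hsum : A.card + B.card = (A ∪ B).card + (A ∩ B).card :=
      (Finset.card_union_add_card_inter A B).symm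
    have hAR : (n:ℝ)/2 + α*n ≤ (A.card : ℝ) := by rw [hAcard]; linarith
    have hBR : (n:ℝ)/2 + α*n ≤ (B.card : ℝ) := by rw [hBcard]; linarith
    have hsumR : (A.card : ℝ) + B.card = ((A ∪ B).card : ℝ) + ((A ∩ B).card : ℝ) := by
      exact_mod_cast hsum
    have hUR : ((A ∪ B).card : ℝ) ≤ n := by exact_mod_cast hUnion
    rw [hTAB]
    linarith
  -- P.card as a sum over S
  have hPsum : P.card = ∑ x ∈ S, (T x).card := by
    rw [Finset.card_eq_sum_card_fiberwise (f := Prod.fst) (t := S)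
      (fun q hq => by
        simp only [hP, Finset.mem_filter, Finset.mem_product] at hq
        exact (Finset.mem_product.mp (Finset.mem_filter.mp (show q ∈ P from hq)).1).1)]
    refine Finset.sum_congr rfl fun x hx => ?_
    have hfib : P.filter (fun q => q.1 = x) = {x} ×ˢ T x := by
      ext ⟨a, b⟩
      simp only [hP, hT, Finset.mem_filter, Finset.mem_product, Finset.mem_singleton]
      constructor
      · rintro ⟨⟨⟨_, hb⟩, h1, h2⟩, rfl⟩
        exact ⟨rfl, hb, h1, h2⟩
      · rintro ⟨rfl, hb, h1, h2⟩
        exact ⟨⟨⟨hx, hb⟩, h1, h2⟩, rfl⟩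
    rw [hfib, Finset.card_product, Finset.card_singleton, one_mul]
  -- upper bound: P.card ≤ 2 * F.card
  have hPF : P.card ≤ 2 * F.card := by
    have himg : P.image (fun q => ({q.1, q.2} : Finset ℕ)) ⊆ F := by
      intro s hs
      simp only [Finset.mem_image] at hs
      obtain ⟨⟨x, y⟩, hq, rfl⟩ := hs
      simp only [hP, Finset.mem_filter, Finset.mem_product] at hq
      obtain ⟨⟨hxS, hyI⟩, h1, h2⟩ := hq
      have hxI : x ∈ I := (Finset.filter_subset _ _) hxS
      obtain ⟨_, _, hxy⟩ := hdist u x y h1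
      simp only [hF, Finset.mem_filter, Finset.mem_powersetCard]
      refine ⟨⟨?_, ?_⟩, h1, h2⟩
      · intro z hz
        simp only [Finset.mem_insert, Finset.mem_singleton] at hz
        rcases hz with rfl | rfl
        · exact hxI
        · exact hyI
      · rw [Finset.card_insert_of_notMem (by simp [hxy]), Finset.card_singleton]
    have hfiber : P.card ≤ 2 * (P.image (fun q => ({q.1, q.2} : Finset ℕ))).card := by
      apply Finset.card_le_mul_card_image
      intro s hs
      simp only [Finset.mem_image] at hs
      obtain ⟨⟨x, y⟩, hq, rfl⟩ := hs
      simp only [hP, Finset.mem_filter, Finset.mem_product] at hq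
      obtain ⟨hxy1, h1, h2⟩ := hq
      obtain ⟨_, _, hxy⟩ := hdist u x y h1
      have hsub : P.filter (fun q => ({q.1, q.2} : Finset ℕ) = {x, y}) ⊆
          ({(x, y), (y, x)} : Finset (ℕ × ℕ)) := by
        intro ⟨a, b⟩ hab
        simp only [Finset.mem_filter] at hab
        obtain ⟨habP, habeq⟩ := hab
        simp only [hP, Finset.mem_filter, Finset.mem_product] at habP
        obtain ⟨_, ha1, _⟩ := habP
        obtain ⟨_, _, hab'⟩ := hdist u a b ha1
        have haMem : a ∈ ({x, y} : Finset ℕ) := by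
          rw [← habeq]; simp
        have hbMem : b ∈ ({x, y} : Finset ℕ) := by
          rw [← habeq]; simp
        simp only [Finset.mem_insert, Finset.mem_singleton] at haMem hbMem ⊢
        rcases haMem with rfl | rfl <;> rcases hbMem with rfl | rfl
        · exact absurd rfl hab'
        · left; rfl
        · right; simp [Prod.ext_iff]
        · exact absurd rfl hab'
      calc (P.filter (fun q => ({q.1, q.2} : Finset ℕ) = {x, y})).card
          ≤ ({(x, y), (y, x)} : Finset (ℕ × ℕ)).card := Finset.card_le_card hsub
        _ ≤ 2 := (Finset.card_insert_le _ _).trans (by simp)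
    exact hfiber.trans (Nat.mul_le_mul_left 2 (Finset.card_le_card himg))
  -- lower bound on |S|
  have hScard : n ≤ 4 * S.card := by
    have hsub : (Finset.Icc ((n+1)/2) n) \ {u, v} ⊆ S := by
      intro x hx
      simp only [Finset.mem_sdiff, Finset.mem_Icc, Finset.mem_insert,
        Finset.mem_singleton] at hx
      obtain ⟨⟨hax, hxn⟩, hx2⟩ := hx
      push_neg at hx2
      simp only [hS, Finset.mem_filter, hI, Finset.mem_Icc]
      exact ⟨⟨by omega, hxn⟩, by omega, hx2.1, hx2.2⟩
    have h1 : (Finset.Icc ((n+1)/2) n).card - ({u, v} : Finset ℕ).card ≤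
        ((Finset.Icc ((n+1)/2) n) \ {u, v}).card := Finset.le_card_sdiff _ _
    have h2 := Finset.card_le_card hsub
    have h3 : (Finset.Icc ((n+1)/2) n).card = n + 1 - (n+1)/2 := Nat.card_Icc _ _
    have h4 := hpair2 u v
    omega
  -- combine
  have hSR : (n:ℝ)/4 ≤ (S.card : ℝ) := by
    have : (n:ℝ) ≤ 4 * (S.card : ℝ) := by exact_mod_cast hScard
    linarith
  have hsumLB : (S.card : ℝ) * (2*α*n) ≤ (P.card : ℝ) := by
    rw [hPsum]
    push_cast
    have := Finset.card_nsmul_le_sum S (fun x => ((T x).card : ℝ)) (2*α*n) hTx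
    simpa [nsmul_eq_mul, mul_comm] using this
  have hPFR : (P.card : ℝ) ≤ 2 * (F.card : ℝ) := by exact_mod_cast hPF
  have hn0 : (0:ℝ) ≤ (n:ℝ) := Nat.cast_nonneg n
  have haux : (n:ℝ)/4 * (2*α*n) ≤ (S.card : ℝ) * (2*α*n) := by
    apply mul_le_mul_of_nonneg_right hSR
    positivity
  have : α * (n:ℝ)^2 / 4 ≤ (F.card : ℝ) := by nlinarith
  exact this
end
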